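/- For every real x with |x| ≤ π/2 and every natural number p, one has (cos x)^{4p} ≤ exp(−p·x²). -/

import Mathlib

open scoped Real

lemma cos_le_one_sub_sq_div_four (x : ℝ) (hx : |x| ≤ π / 2) :
    Real.cos x ≤ 1 - x ^ 2 / 4 := by
  wlog hx0 : 0 ≤ x generalizing x
  · have := this (-x) (by rwa [abs_neg]) (by linarith [not_le.mp hx0])
    simpa using this
  rcases eq_or_lt_of_le hx0 with h | h
  · simp [← h]
  · -- use 1 - cos x = 2 sin(x/2)^2 and sin t > t - t^3/4 for 0 < t ≤ 1
    have ht1 : x / 2 ≤ 1 := by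
      have : |x| ≤ π / 2 := hx
      rw [abs_of_nonneg hx0] at this
      nlinarith [Real.pi_lt_d2]
    have ht0 : 0 < x / 2 := by linarith
    have hs : x / 2 - (x / 2) ^ 3 / 4 < Real.sin (x / 2) := by
      have := Real.sin_gt_sub_cube ht0; linarith [pow_pos ht0 3]
    have hsin_nonneg : 0 ≤ x / 2 - (x / 2) ^ 3 / 4 := by
      nlinarith [mul_nonneg (mul_nonneg ht0.le (by linarith : (0:ℝ) ≤ 1 - x/2)) (by linarith : (0:ℝ) ≤ 1 + x/2)]
    have hcos : Real.cos x = 1 - 2 * Real.sin (x / 2) ^ 2 := by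
      have h1 := Real.cos_two_mul (x/2)
      rw [show 2*(x/2) = x by ring] at h1
      have h2 : Real.sin (x/2)^2 + Real.cos (x/2)^2 = 1 := Real.sin_sq_add_cos_sq _
      linarith
    rw [hcos]
    have : (x / 2 - (x / 2) ^ 3 / 4) ^ 2 ≤ Real.sin (x / 2) ^ 2 := by nlinarith
    have h4 : (x/2)^2 ≤ 1 := by nlinarith
    nlinarith [sq_nonneg (x/2), mul_nonneg (mul_pos ht0 ht0).le (sub_nonneg.mpr h4)]

theorem cos_pow_le_exp_neg (x : ℝ) (hx : |x| ≤ π / 2) (p : ℕ) :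
    Real.cos x ^ (4 * p) ≤ Real.exp (-(p * x ^ 2)) := by
  have h1 : -π/2 ≤ x := by cases abs_le.mp hx; linarith
  have h2 : x ≤ π/2 := (abs_le.mp hx).2
  have hc0 : 0 ≤ Real.cos x := Real.cos_nonneg_of_mem_Icc ⟨by linarith, h2⟩
  have hle : Real.cos x ≤ Real.exp (-(x ^ 2 / 4)) := by
    calc Real.cos x ≤ 1 - x ^ 2 / 4 := cos_le_one_sub_sq_div_four x hx
    _ ≤ Real.exp (-(x ^ 2 / 4)) := by
        have := Real.add_one_le_exp (-(x ^ 2 / 4)); linarith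
  calc Real.cos x ^ (4 * p) ≤ Real.exp (-(x ^ 2 / 4)) ^ (4 * p) :=
        pow_le_pow_left₀ hc0 hle _
    _ = Real.exp (-(p * x ^ 2)) := by
        rw [← Real.exp_nat_mul]
        congr 1
        push_cast
        ring
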